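/- If a is a regular scale factor with a'(t) > 0 for all t > 0, then for every τ > 0 there exists t ∈ (0, τ) at which the inequality a(t)·a''(t)/a'(t)² < 1 is strict (equality on all of (0,τ) would force a to be exponential, contradicting a(0)=0). -/

import Mathlib

lemma const_of_hasDerivAt_zero' {f : ℝ → ℝ} {s : Set ℝ} (hconv : Convex ℝ s)
    (ho : IsOpen s) (h : ∀ x ∈ s, HasDerivAt f 0 x) {x y : ℝ}
    (hx : x ∈ s) (hy : y ∈ s) : f x = f y := by
  refine hconv.is_const_of_fderivWithin_eq_zero
    (fun z hz => ((h z hz).differentiableAt).differentiableWithinAt)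
    (fun z hz => ?_) hx hy
  rw [fderivWithin_of_isOpen ho hz, (h z hz).hasFDerivAt.fderiv]
  exact ContinuousLinearMap.ext fun v => by simp

/-- For a regular scale factor with positive derivative, the regularity inequality is
strict somewhere in every interval `(0, τ)`. -/
theorem regular_strict_somewhere (a : ℝ → ℝ)
    (ha0 : a 0 = 0)
    (hmono : StrictMonoOn a (Set.Ici 0))
    (hcont : ContinuousOn a (Set.Ici 0))
    (hsmooth : ContDiffOn ℝ 2 a (Set.Ioi 0))
    (hreg : ∀ t > (0:ℝ), a t * deriv (deriv a) t / (deriv a t) ^ 2 ≤ 1)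
    (hpos : ∀ t > (0:ℝ), 0 < deriv a t) :
    ∀ τ > (0:ℝ), ∃ t ∈ Set.Ioo 0 τ,
      a t * deriv (deriv a) t / (deriv a t) ^ 2 < 1 := by
  intro τ hτ
  by_contra hcon
  push_neg at hcon
  -- equality holds on (0, τ)
  have heq : ∀ t ∈ Set.Ioo (0:ℝ) τ, a t * deriv (deriv a) t = (deriv a t) ^ 2 := by
    intro t ht
    have hd : (deriv a t) ^ 2 ≠ 0 := pow_ne_zero 2 (hpos t ht.1).ne'
    have h1 : a t * deriv (deriv a) t / (deriv a t) ^ 2 = 1 :=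
      le_antisymm (hreg t ht.1) (hcon t ht)
    exact (div_eq_one_iff_eq hd).mp h1
  have hapos : ∀ t ∈ Set.Ioo (0:ℝ) τ, 0 < a t := by
    intro t ht
    have := hmono (Set.mem_Ici.mpr le_rfl) (Set.mem_Ici.mpr ht.1.le) ht.1
    simpa [ha0] using this
  -- differentiability
  have hda : ∀ t ∈ Set.Ioi (0:ℝ), HasDerivAt a (deriv a t) t := by
    intro t ht
    exact ((hsmooth.contDiffAt (isOpen_Ioi.mem_nhds ht)).differentiableAt
      (by norm_num)).hasDerivAt
  have hdaCD : ContDiffOn ℝ 1 (deriv a) (Set.Ioi 0) :=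
    hsmooth.deriv_of_isOpen isOpen_Ioi (by norm_num)
  have hdda : ∀ t ∈ Set.Ioi (0:ℝ), HasDerivAt (deriv a) (deriv (deriv a) t) t := by
    intro t ht
    exact ((hdaCD.contDiffAt (isOpen_Ioi.mem_nhds ht)).differentiableAt
      (by norm_num)).hasDerivAt
  -- h := a / a' has derivative 0 on (0, τ)
  set h : ℝ → ℝ := fun t => a t / deriv a t with hh
  have hder : ∀ t ∈ Set.Ioo (0:ℝ) τ, HasDerivAt h 0 t := by
    intro t ht
    have h0 : t ∈ Set.Ioi (0:ℝ) := ht.1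
    have := (hda t h0).div (hdda t h0) (hpos t ht.1).ne'
    have e : (deriv a t * deriv a t - a t * deriv (deriv a) t) / deriv a t ^ 2 = 0 := by
      rw [heq t ht]; ring
    rw [e] at this
    exact this
  obtain ⟨t0, ht0⟩ : ∃ t0, t0 ∈ Set.Ioo (0:ℝ) τ := ⟨τ/2, by constructor <;> linarith⟩
  set c : ℝ := h t0 with hc
  have hcpos : 0 < c := div_pos (hapos t0 ht0) (hpos t0 ht0.1)
  have hconst : ∀ t ∈ Set.Ioo (0:ℝ) τ, a t = c * deriv a t := by
    intro t ht
    have := const_of_hasDerivAt_zero' (convex_Ioo 0 τ) isOpen_Ioo hder ht ht0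
    have ht' : h t = c := this
    have hd : deriv a t ≠ 0 := (hpos t ht.1).ne'
    rw [hh] at ht'
    simp only at ht'
    rw [div_eq_iff hd] at ht'
    linarith [ht']
  -- F := a t * exp (-t/c) has derivative 0 on (0, τ)
  set F : ℝ → ℝ := fun t => a t * Real.exp (-t / c) with hF
  have hFder : ∀ t ∈ Set.Ioo (0:ℝ) τ, HasDerivAt F 0 t := by
    intro t ht
    have he : HasDerivAt (fun t : ℝ => Real.exp (-t / c)) (Real.exp (-t / c) * (-1 / c)) t := by
      have : HasDerivAt (fun t : ℝ => -t / c) (-1 / c) t := by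
        simpa using ((hasDerivAt_id t).neg.div_const c)
      exact (Real.hasDerivAt_exp _).comp t this
    have := (hda t ht.1).mul he
    have e : deriv a t * Real.exp (-t / c) + a t * (Real.exp (-t / c) * (-1 / c)) = 0 := by
      rw [hconst t ht]
      field_simp
      ring
    rw [e] at this
    exact this
  have hFconst : ∀ t ∈ Set.Ioo (0:ℝ) τ, F t = F t0 :=
    fun t ht => const_of_hasDerivAt_zero' (convex_Ioo 0 τ) isOpen_Ioo hFder ht ht0
  -- F tends to 0 at 0 within (0, τ)
  have hlim : Filter.Tendsto F (nhdsWithin 0 (Set.Ioo 0 τ)) (nhds 0) := by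
    have h1 : Filter.Tendsto a (nhdsWithin 0 (Set.Ioo 0 τ)) (nhds 0) := by
      have := (hcont 0 (Set.mem_Ici.mpr le_rfl)).tendsto
      rw [ha0] at this
      exact this.mono_left (nhdsWithin_mono 0 (fun x hx => le_of_lt hx.1))
    have h2 : Filter.Tendsto (fun t : ℝ => Real.exp (-t / c))
        (nhdsWithin 0 (Set.Ioo 0 τ)) (nhds (Real.exp (-0 / c))) := by
      exact ((Real.continuous_exp.comp ((continuous_neg.div_const c))).tendsto 0).mono_left
        nhdsWithin_le_nhds
    have := h1.mul h2
    simpa using this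
  have hne : (nhdsWithin (0:ℝ) (Set.Ioo 0 τ)).NeBot := left_nhdsWithin_Ioo_neBot hτ
  have hlim2 : Filter.Tendsto F (nhdsWithin 0 (Set.Ioo 0 τ)) (nhds (F t0)) := by
    refine Filter.Tendsto.congr' ?_ tendsto_const_nhds
    filter_upwards [self_mem_nhdsWithin] with t ht
    exact (hFconst t ht).symm
  have hF0 : a t0 * Real.exp (-t0 / c) = 0 := tendsto_nhds_unique hlim2 hlim
  rcases mul_eq_zero.mp hF0 with h' | h'
  · exact (hapos t0 ht0).ne' h'
  · exact (Real.exp_pos (-t0 / c)).ne' h'
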